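/- arXiv:2209.14701 — 2 statements merged into one kernel-verified Lean document; each statement's English description precedes it below -/
import Mathlib

section
/- No universal first-order sentence in the language of ordered groups distinguishes between any two nontrivial linearly ordered abelian groups: if φ is a universal sentence true in some nontrivial ordered abelian group, then φ is true in every nontrivial ordered abelian group. -/
open FirstOrder FirstOrder.Language

/-- The first-order language `{+, -, 0, ≤}` of ordered abelian groups. -/
def oagLang : Language where
  Functions
    | 0 => Unit   -- the constant 0
    | 1 => Unit   -- negation
    | 2 => Unit   -- addition
    | _ + 3 => Empty
  Relations
    | 2 => Unit   -- the order relation ≤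
    | 0 => Empty
    | 1 => Empty
    | _ + 3 => Empty

/-- The natural `oagLang`-structure on an ordered abelian group. -/
def oagStructure (G : Type) [AddCommGroup G] [LE G] : oagLang.Structure G where
  funMap {n} f x :=
    match n, f with
    | 0, _ => 0
    | 1, _ => -(x 0)
    | 2, _ => x 0 + x 1
  RelMap {n} r x :=
    match n, r with
    | 2, _ => x 0 ≤ x 1

/-- A sentence is universal if it is of the form `∀ x₁ ... ∀ x_k, ψ` with `ψ`
quantifier-free. -/
def IsUniversalSentence {L : Language} (φ : L.Sentence) : Prop :=
  ∃ (k : ℕ) (ψ : L.BoundedFormula Empty k), ψ.IsQF ∧ φ = ψ.alls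

attribute [local instance] oagStructure

/-! ### Auxiliary machinery -/

/-- Two elements of (possibly different) linearly ordered abelian groups have matching signs. -/
def SgnIff {A B : Type*} [AddCommGroup A] [LinearOrder A] [IsOrderedAddMonoid A] [AddCommGroup B] [LinearOrder B] [IsOrderedAddMonoid B]
    (s : A) (t : B) : Prop :=
  (0 < s ↔ 0 < t) ∧ (s = 0 ↔ t = 0)

namespace SgnIff

variable {A B C : Type*} [AddCommGroup A] [LinearOrder A] [IsOrderedAddMonoid A] [AddCommGroup B] [LinearOrder B] [IsOrderedAddMonoid B]
  [AddCommGroup C] [LinearOrder C] [IsOrderedAddMonoid C] {s : A} {t : B} {u : C}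

lemma symm (h : SgnIff s t) : SgnIff t s := ⟨h.1.symm, h.2.symm⟩

lemma trans (h : SgnIff s t) (h' : SgnIff t u) : SgnIff s u :=
  ⟨h.1.trans h'.1, h.2.trans h'.2⟩

lemma lt (h : SgnIff s t) : s < 0 ↔ t < 0 := by
  constructor
  · intro hs
    rcases lt_trichotomy t 0 with h' | h' | h'
    · exact h'
    · exact absurd (h.2.mpr h') hs.ne
    · exact absurd (h.1.mpr h') (lt_asymm hs)
  · intro ht
    rcases lt_trichotomy s 0 with h' | h' | h'
    · exact h'
    · exact absurd (h.2.mp h') ht.ne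
    · exact absurd (h.1.mp h') (lt_asymm ht)

lemma neg (h : SgnIff s t) : SgnIff (-s) (-t) := by
  constructor
  · rw [neg_pos, neg_pos]; exact h.lt
  · rw [neg_eq_zero, neg_eq_zero]; exact h.2

lemma of_neg (h : SgnIff (-s) (-t)) : SgnIff s t := by
  simpa using h.neg

end SgnIff

lemma zsmul_pos_iff' {H : Type*} [AddCommGroup H] [LinearOrder H] [IsOrderedAddMonoid H] {c : ℤ} (hc : 0 < c) {s : H} :
    0 < c • s ↔ 0 < s := by
  conv_lhs => rw [show (0:H) = c • (0:H) by simp]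
  exact zsmul_lt_zsmul_iff_right hc

lemma zsmul_neg_iff' {H : Type*} [AddCommGroup H] [LinearOrder H] [IsOrderedAddMonoid H] {c : ℤ} (hc : 0 < c) {s : H} :
    c • s < 0 ↔ s < 0 := by
  conv_lhs => rw [show (0:H) = c • (0:H) by simp]
  exact zsmul_lt_zsmul_iff_right hc

lemma sgnIff_zsmul {G : Type*} [AddCommGroup G] [LinearOrder G] [IsOrderedAddMonoid G] {g : G} (hg : 0 < g) (N : ℤ) :
    SgnIff (N • g) N := by
  rcases lt_trichotomy N 0 with h | h | h
  · have h1 : 0 < (-N) • g := (zsmul_pos_iff' (neg_pos.2 h)).2 hg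
    have h2 : N • g < 0 := by
      rw [neg_smul] at h1
      exact neg_pos.1 h1
    exact ⟨iff_of_false (lt_asymm h2) (lt_asymm h), iff_of_false h2.ne h.ne⟩
  · subst h
    simp [SgnIff]
  · have h1 : 0 < N • g := (zsmul_pos_iff' h).2 hg
    exact ⟨iff_of_true h1 h, iff_of_false h1.ne' h.ne'⟩

/-- Separation of finitely many rationals. -/
lemma exists_sep (E L U : Finset ℚ)
    (hEE : ∀ e ∈ E, ∀ e' ∈ E, e = e')
    (hLE : ∀ l ∈ L, ∀ e ∈ E, l < e)
    (hEU : ∀ e ∈ E, ∀ u ∈ U, e < u)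
    (hLU : ∀ l ∈ L, ∀ u ∈ U, l < u) :
    ∃ x : ℚ, (∀ e ∈ E, x = e) ∧ (∀ l ∈ L, l < x) ∧ (∀ u ∈ U, x < u) := by
  rcases E.eq_empty_or_nonempty with hE | ⟨e, he⟩
  · rcases L.eq_empty_or_nonempty with hL | hL
    · rcases U.eq_empty_or_nonempty with hU | hU
      · exact ⟨0, by simp [hE, hL, hU]⟩
      · refine ⟨U.min' hU - 1, by simp [hE], by simp [hL], fun u hu => ?_⟩
        have := U.min'_le u hu
        linarith
    · rcases U.eq_empty_or_nonempty with hU | hU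
      · refine ⟨L.max' hL + 1, by simp [hE], fun l hl => ?_, by simp [hU]⟩
        have := L.le_max' l hl
        linarith
      · refine ⟨(L.max' hL + U.min' hU) / 2, by simp [hE], fun l hl => ?_, fun u hu => ?_⟩
        · have h1 := L.le_max' l hl
          have h2 := hLU _ (L.max'_mem hL) _ (U.min'_mem hU)
          linarith
        · have h1 := U.min'_le u hu
          have h2 := hLU _ (L.max'_mem hL) _ (U.min'_mem hU)
          linarith
  · exact ⟨e, fun e' he' => hEE _ he _ he', fun l hl => hLE _ hl _ he, fun u hu => hEU _ he _ hu⟩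

/-- Fourier–Motzkin style core lemma: given finitely many integer vectors and a tuple in a
linearly ordered abelian group, there is a rational tuple realizing the same sign pattern of
the corresponding linear forms. -/
lemma fm {H : Type} [AddCommGroup H] [LinearOrder H] [IsOrderedAddMonoid H] :
    ∀ (k : ℕ) (V₀ : Finset (Fin k → ℤ)) (b : Fin k → H),
    ∃ x : Fin k → ℚ, ∀ v ∈ V₀, SgnIff (∑ i, v i • b i) (∑ i, (v i : ℚ) * x i) := by
  intro k
  induction k with
  | zero =>
    intro V₀ b
    exact ⟨fun _ => 0, fun v _ => by simp [SgnIff]⟩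
  | succ k ih =>
    intro V₀ b
    classical
    set V : Finset (Fin (k+1) → ℤ) := V₀ ∪ V₀.image (fun v => -v) with hV
    have hV₀V : V₀ ⊆ V := Finset.subset_union_left
    have hnegV : ∀ v ∈ V, -v ∈ V := by
      intro v hv
      rcases Finset.mem_union.1 hv with h | h
      · exact Finset.mem_union_right _ (Finset.mem_image_of_mem _ h)
      · rcases Finset.mem_image.1 h with ⟨u, hu, rfl⟩
        simpa using hV₀V hu
    set b' : Fin k → H := fun i => b i.succ with hb'
    set V' : Finset (Fin k → ℤ) :=
      V.image Fin.tail ∪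
        (V ×ˢ V).image (fun p => p.1 0 • Fin.tail p.2 - p.2 0 • Fin.tail p.1) with hV'
    obtain ⟨x', hx'⟩ := ih V' b'
    set T : (Fin k → ℤ) → H := fun w => ∑ i, w i • b' i with hT
    set Q : (Fin k → ℤ) → ℚ := fun w => ∑ i, (w i : ℚ) * x' i with hQ
    set S : (Fin (k+1) → ℤ) → H := fun v => ∑ i, v i • b i with hS
    set r : (Fin (k+1) → ℤ) → ℚ := fun v => -(Q (Fin.tail v)) / (v 0) with hr
    have hSdec : ∀ v, S v = v 0 • b 0 + T (Fin.tail v) := by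
      intro v
      simp [hS, hT, Fin.sum_univ_succ, Fin.tail, hb']
    have hqv : ∀ v : Fin (k+1) → ℤ, v 0 ≠ 0 → Q (Fin.tail v) = -(v 0 : ℚ) * r v := by
      intro v hv0
      have hv0' : ((v 0 : ℤ) : ℚ) ≠ 0 := Int.cast_ne_zero.mpr hv0
      rw [hr]
      field_simp
    -- pair comparison lemma
    have pair : ∀ u ∈ V, ∀ v ∈ V, u 0 ≠ 0 → v 0 ≠ 0 →
        SgnIff (u 0 • S v - v 0 • S u) ((u 0 : ℚ) * (v 0 : ℚ) * (r u - r v)) := by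
      intro u hu v hv hu0 hv0
      have hw : (u 0 • Fin.tail v - v 0 • Fin.tail u) ∈ V' :=
        Finset.mem_union_right _
          (Finset.mem_image.2 ⟨(u, v), Finset.mem_product.2 ⟨hu, hv⟩, rfl⟩)
      have h1 := hx' _ hw
      have e1 : (∑ i, (u 0 • Fin.tail v - v 0 • Fin.tail u) i • b' i)
          = u 0 • S v - v 0 • S u := by
        have e0 : (∑ i, (u 0 • Fin.tail v - v 0 • Fin.tail u) i • b' i)
            = u 0 • T (Fin.tail v) - v 0 • T (Fin.tail u) := by
          simp [hT, sub_smul, mul_smul, Finset.sum_sub_distrib, Finset.smul_sum]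
        rw [e0, hSdec u, hSdec v]
        module
      have e2 : (∑ i, ((u 0 • Fin.tail v - v 0 • Fin.tail u) i : ℚ) * x' i)
          = (u 0 : ℚ) * (v 0 : ℚ) * (r u - r v) := by
        have e0 : (∑ i, ((u 0 • Fin.tail v - v 0 • Fin.tail u) i : ℚ) * x' i)
            = (u 0 : ℚ) * Q (Fin.tail v) - (v 0 : ℚ) * Q (Fin.tail u) := by
          simp only [hQ, Pi.sub_apply, Pi.smul_apply, smul_eq_mul]
          rw [Finset.mul_sum, Finset.mul_sum, ← Finset.sum_sub_distrib]
          apply Finset.sum_congr rfl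
          intro i _
          push_cast
          ring
        rw [e0, hqv u hu0, hqv v hv0]
        ring
      rw [e1, e2] at h1
      exact h1
    -- classification of the constraints with positive head coefficient
    set E : Finset ℚ := (V.filter (fun v => 0 < v 0 ∧ S v = 0)).image r with hEdef
    set L : Finset ℚ := (V.filter (fun v => 0 < v 0 ∧ 0 < S v)).image r with hLdef
    set U : Finset ℚ := (V.filter (fun v => 0 < v 0 ∧ S v < 0)).image r with hUdef
    have hcast : ∀ v : Fin (k+1) → ℤ, 0 < v 0 → (0:ℚ) < (v 0 : ℚ) := by
      intro v hv; exact_mod_cast hv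
    have hEE : ∀ e ∈ E, ∀ e' ∈ E, e = e' := by
      intro e he e' he'
      rcases Finset.mem_image.1 he with ⟨u, hu, rfl⟩
      rcases Finset.mem_image.1 he' with ⟨v, hv, rfl⟩
      rcases Finset.mem_filter.1 hu with ⟨huV, hu0, huS⟩
      rcases Finset.mem_filter.1 hv with ⟨hvV, hv0, hvS⟩
      have h := pair u huV v hvV hu0.ne' hv0.ne'
      have hz : u 0 • S v - v 0 • S u = 0 := by rw [huS, hvS]; simp
      have hq := h.2.mp hz
      have hne : (u 0 : ℚ) * (v 0 : ℚ) ≠ 0 :=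
        (mul_pos (hcast u hu0) (hcast v hv0)).ne'
      have hsub : r u - r v = 0 := by
        rcases mul_eq_zero.1 hq with h' | h'
        · exact absurd h' hne
        · exact h'
      linarith [hsub]
    have hLE : ∀ l ∈ L, ∀ e ∈ E, l < e := by
      intro l hl e he
      rcases Finset.mem_image.1 hl with ⟨u, hu, rfl⟩
      rcases Finset.mem_image.1 he with ⟨v, hv, rfl⟩
      rcases Finset.mem_filter.1 hu with ⟨huV, hu0, huS⟩
      rcases Finset.mem_filter.1 hv with ⟨hvV, hv0, hvS⟩
      have h := pair u huV v hvV hu0.ne' hv0.ne'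
      have hz : u 0 • S v - v 0 • S u < 0 := by
        rw [hvS]; simpa using (zsmul_pos_iff' hv0).2 huS
      have hq := h.lt.mp hz
      nlinarith [mul_pos (hcast u hu0) (hcast v hv0)]
    have hEU : ∀ e ∈ E, ∀ u ∈ U, e < u := by
      intro e he l hl
      rcases Finset.mem_image.1 he with ⟨u, hu, rfl⟩
      rcases Finset.mem_image.1 hl with ⟨v, hv, rfl⟩
      rcases Finset.mem_filter.1 hu with ⟨huV, hu0, huS⟩
      rcases Finset.mem_filter.1 hv with ⟨hvV, hv0, hvS⟩
      have h := pair u huV v hvV hu0.ne' hv0.ne'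
      have hz : u 0 • S v - v 0 • S u < 0 := by
        rw [huS]; simpa using (zsmul_neg_iff' hu0).2 hvS
      have hq := h.lt.mp hz
      nlinarith [mul_pos (hcast u hu0) (hcast v hv0)]
    have hLU : ∀ l ∈ L, ∀ u ∈ U, l < u := by
      intro l hl e he
      rcases Finset.mem_image.1 hl with ⟨u, hu, rfl⟩
      rcases Finset.mem_image.1 he with ⟨v, hv, rfl⟩
      rcases Finset.mem_filter.1 hu with ⟨huV, hu0, huS⟩
      rcases Finset.mem_filter.1 hv with ⟨hvV, hv0, hvS⟩
      have h := pair u huV v hvV hu0.ne' hv0.ne'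
      have hz : u 0 • S v - v 0 • S u < 0 := by
        have h1 : u 0 • S v < 0 := (zsmul_neg_iff' hu0).2 hvS
        have h2 : 0 < v 0 • S u := (zsmul_pos_iff' hv0).2 huS
        exact sub_neg.2 (h1.trans h2)
      have hq := h.lt.mp hz
      nlinarith [mul_pos (hcast u hu0) (hcast v hv0)]
    obtain ⟨x₀, hx₀E, hx₀L, hx₀U⟩ := exists_sep E L U hEE hLE hEU hLU
    set x : Fin (k+1) → ℚ := Fin.cons x₀ x' with hx
    have hxsum : ∀ v : Fin (k+1) → ℤ,
        ∑ i, (v i : ℚ) * x i = (v 0 : ℚ) * x₀ + Q (Fin.tail v) := by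
      intro v
      simp [hx, hQ, Fin.sum_univ_succ, Fin.tail]
    have claim : ∀ v ∈ V, 0 ≤ v 0 → SgnIff (S v) ((v 0 : ℚ) * x₀ + Q (Fin.tail v)) := by
      intro v hv h0
      rcases eq_or_lt_of_le h0 with heq | hlt
      · have h1 : S v = T (Fin.tail v) := by
          rw [hSdec v, ← heq]; simp
        have h2 : (v 0 : ℚ) * x₀ + Q (Fin.tail v) = Q (Fin.tail v) := by
          rw [← heq]; simp
        rw [h1, h2]
        exact hx' _ (Finset.mem_union_left _ (Finset.mem_image_of_mem _ hv))
      · have hv0 : v 0 ≠ 0 := hlt.ne'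
        have hv0Q : (0:ℚ) < (v 0 : ℚ) := hcast v hlt
        have hrw : (v 0 : ℚ) * x₀ + Q (Fin.tail v) = (v 0 : ℚ) * (x₀ - r v) := by
          rw [hqv v hv0]; ring
        rw [hrw]
        rcases lt_trichotomy (S v) 0 with hSv | hSv | hSv
        · have hmem : r v ∈ U :=
            Finset.mem_image_of_mem r (Finset.mem_filter.2 ⟨hv, hlt, hSv⟩)
          have hxlt : x₀ < r v := hx₀U _ hmem
          constructor
          · exact iff_of_false (lt_asymm hSv) (by nlinarith)
          · exact iff_of_false hSv.ne (by nlinarith)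
        · have hmem : r v ∈ E :=
            Finset.mem_image_of_mem r (Finset.mem_filter.2 ⟨hv, hlt, hSv⟩)
          have hxeq : x₀ = r v := hx₀E _ hmem
          constructor
          · exact iff_of_false (by rw [hSv]; exact lt_irrefl 0) (by rw [hxeq]; simp)
          · exact iff_of_true hSv (by rw [hxeq]; simp)
        · have hmem : r v ∈ L :=
            Finset.mem_image_of_mem r (Finset.mem_filter.2 ⟨hv, hlt, hSv⟩)
          have hxlt : r v < x₀ := hx₀L _ hmem
          constructor
          · exact iff_of_true hSv (by nlinarith)
          · exact iff_of_false hSv.ne' (by nlinarith)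
    refine ⟨x, fun v hv => ?_⟩
    have hvV : v ∈ V := hV₀V hv
    show SgnIff (S v) (∑ i, (v i : ℚ) * x i)
    rw [hxsum v]
    rcases le_or_gt 0 (v 0) with h0 | h0
    · exact claim v hvV h0
    · have h1 := claim (-v) (hnegV v hvV) (by simp [le_of_lt h0])
      have e1 : S (-v) = -(S v) := by
        simp [hS, Finset.sum_neg_distrib, neg_smul]
      have e2 : ((-v) 0 : ℚ) * x₀ + Q (Fin.tail (-v))
          = -((v 0 : ℚ) * x₀ + Q (Fin.tail v)) := by
        simp only [hQ, Pi.neg_apply, Fin.tail]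
        push_cast
        rw [neg_add]
        congr 1
        · ring
        · rw [← Finset.sum_neg_distrib]
          apply Finset.sum_congr rfl
          intro i _
          ring
      rw [e1, e2] at h1
      exact h1.of_neg

/-- Integer coefficients of an `oagLang`-term. -/
def tcoeff {k : ℕ} : oagLang.Term (Empty ⊕ Fin k) → (Fin k → ℤ)
  | .var (Sum.inl e) => e.elim
  | .var (Sum.inr i) => fun j => if j = i then 1 else 0
  | @Term.func _ _ 0 _ _ => 0
  | @Term.func _ _ 1 _ ts => -tcoeff (ts 0)
  | @Term.func _ _ 2 _ ts => tcoeff (ts 0) + tcoeff (ts 1)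
  | @Term.func _ _ (_ + 3) f _ => Empty.elim f

theorem realize_tcoeff {M : Type} [AddCommGroup M] [LinearOrder M] [IsOrderedAddMonoid M] {k : ℕ} (b : Fin k → M)
    (w : Empty → M) :
    ∀ t : oagLang.Term (Empty ⊕ Fin k),
      Term.realize (Sum.elim w b) t = ∑ i, tcoeff t i • b i
  | .var (Sum.inl e) => e.elim
  | .var (Sum.inr i) => by
      simp [tcoeff, Term.realize, Finset.sum_ite_eq]
  | @Term.func _ _ 0 f ts => by
      show (0 : M) = _
      simp [tcoeff]
  | @Term.func _ _ 1 f ts => by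
      show -(Term.realize (Sum.elim w b) (ts 0)) = _
      rw [realize_tcoeff b w (ts 0)]
      simp [tcoeff, neg_smul, Finset.sum_neg_distrib]
  | @Term.func _ _ 2 f ts => by
      show Term.realize (Sum.elim w b) (ts 0) + Term.realize (Sum.elim w b) (ts 1) = _
      rw [realize_tcoeff b w (ts 0), realize_tcoeff b w (ts 1)]
      simp [tcoeff, add_smul, Finset.sum_add_distrib]
  | @Term.func _ _ (_ + 3) f _ => Empty.elim f

lemma sum_sub_smul {A : Type*} [AddCommGroup A] {n : ℕ} (v w : Fin n → ℤ) (b : Fin n → A) :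
    ∑ i, (v - w) i • b i = (∑ i, v i • b i) - ∑ i, w i • b i := by
  simp [sub_smul, Finset.sum_sub_distrib]

/-- The (finitely many) coefficient vectors of the atomic subformulas of a formula. -/
def fvecs : ∀ {n : ℕ}, oagLang.BoundedFormula Empty n → Finset (Fin n → ℤ)
  | _, .falsum => ∅
  | _, .equal t₁ t₂ => {tcoeff t₁ - tcoeff t₂}
  | _, @BoundedFormula.rel _ _ _ 0 R _ => Empty.elim R
  | _, @BoundedFormula.rel _ _ _ 1 R _ => Empty.elim R
  | _, @BoundedFormula.rel _ _ _ 2 _ ts => {tcoeff (ts 0) - tcoeff (ts 1)}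
  | _, @BoundedFormula.rel _ _ _ (_ + 3) R _ => Empty.elim R
  | _, .imp f g => fvecs f ∪ fvecs g
  | _, .all _ => ∅

/-- Quantifier-free formulas cannot distinguish tuples with matching sign data. -/
lemma qf_transfer {M N : Type} [AddCommGroup M] [LinearOrder M] [IsOrderedAddMonoid M] [AddCommGroup N] [LinearOrder N] [IsOrderedAddMonoid N]
    {n : ℕ} {ψ : oagLang.BoundedFormula Empty n} (h : ψ.IsQF) :
    ∀ (vM : Empty → M) (vN : Empty → N) (b : Fin n → M) (c : Fin n → N),
      (∀ v ∈ fvecs ψ, SgnIff (∑ i, v i • b i) (∑ i, v i • c i)) →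
      (ψ.Realize vM b ↔ ψ.Realize vN c) := by
  induction h with
  | falsum =>
    intro vM vN b c _
    simp [BoundedFormula.Realize]
  | of_isAtomic hatom =>
    cases hatom with
    | equal t₁ t₂ =>
      intro vM vN b c hm
      have hv := hm (tcoeff t₁ - tcoeff t₂)
        (show _ ∈ ({tcoeff t₁ - tcoeff t₂} : Finset _) from Finset.mem_singleton_self _)
      rw [BoundedFormula.realize_bdEqual, BoundedFormula.realize_bdEqual,
        realize_tcoeff b vM t₁, realize_tcoeff b vM t₂,
        realize_tcoeff c vN t₁, realize_tcoeff c vN t₂,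
        ← sub_eq_zero, ← sum_sub_smul,
        ← sub_eq_zero (b := ∑ i, tcoeff t₂ i • c i), ← sum_sub_smul]
      exact hv.2
    | @rel l R ts =>
      rcases l with _ | _ | _ | l
      · exact Empty.elim R
      · exact Empty.elim R
      · intro vM vN b c hm
        have hv := hm (tcoeff (ts 0) - tcoeff (ts 1))
          (show _ ∈ ({tcoeff (ts 0) - tcoeff (ts 1)} : Finset _) from Finset.mem_singleton_self _)
        rw [BoundedFormula.realize_rel, BoundedFormula.realize_rel]
        show (Term.realize (Sum.elim vM b) (ts 0) ≤ Term.realize (Sum.elim vM b) (ts 1)) ↔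
          (Term.realize (Sum.elim vN c) (ts 0) ≤ Term.realize (Sum.elim vN c) (ts 1))
        rw [realize_tcoeff b vM (ts 0), realize_tcoeff b vM (ts 1),
          realize_tcoeff c vN (ts 0), realize_tcoeff c vN (ts 1),
          ← sub_nonpos, ← sum_sub_smul,
          ← sub_nonpos (b := ∑ i, tcoeff (ts 1) i • c i), ← sum_sub_smul,
          ← not_lt, ← not_lt]
        exact not_congr hv.1
      · exact Empty.elim R
  | @imp φ₁ φ₂ h₁ h₂ ih₁ ih₂ =>
    intro vM vN b c hm
    rw [BoundedFormula.realize_imp, BoundedFormula.realize_imp]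
    have hsub : fvecs (φ₁.imp φ₂) = fvecs φ₁ ∪ fvecs φ₂ := by rw [fvecs]
    have hm₁ : ∀ v ∈ fvecs φ₁, SgnIff (∑ i, v i • b i) (∑ i, v i • c i) := by
      intro v hv
      exact hm v (by rw [hsub]; exact Finset.mem_union_left _ hv)
    have hm₂ : ∀ v ∈ fvecs φ₂, SgnIff (∑ i, v i • b i) (∑ i, v i • c i) := by
      intro v hv
      exact hm v (by rw [hsub]; exact Finset.mem_union_right _ hv)
    exact imp_congr (ih₁ vM vN b c hm₁) (ih₂ vM vN b c hm₂)

/-- No universal first-order sentence in the language of ordered groups distinguishes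
between nontrivial ordered abelian groups: if a universal sentence holds in some
nontrivial ordered abelian group, it holds in every nontrivial ordered abelian group. -/
theorem universal_sentence_oag_transfer (φ : oagLang.Sentence)
    (huniv : IsUniversalSentence φ)
    (hex : ∃ (G : Type) (i : AddCommGroup G) (j : LinearOrder G) (_ : IsOrderedAddMonoid G),
      Nontrivial G ∧ (letI := i; letI := j; letI := oagStructure G; G ⊨ φ)) :
    ∀ (H : Type) [AddCommGroup H] [LinearOrder H] [IsOrderedAddMonoid H] [Nontrivial H],
      (letI := oagStructure H; H ⊨ φ) := by
  obtain ⟨k, ψ, hqf, rfl⟩ := huniv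
  obtain ⟨G, iG, jG, oG, hGnt, hGφ⟩ := hex
  intro H _ _ _ _
  letI := iG
  letI := jG
  haveI := oG
  haveI := hGnt
  have hG : ∀ xs : Fin k → G, ψ.Realize (default : Empty → G) xs :=
    BoundedFormula.realize_alls.mp hGφ
  refine BoundedFormula.realize_alls.mpr ?_
  intro b
  -- a positive element of G
  obtain ⟨g₀, hg₀⟩ := exists_ne (0 : G)
  obtain ⟨g, hg⟩ : ∃ g : G, 0 < g := by
    rcases hg₀.lt_or_gt with h | h
    · exact ⟨-g₀, neg_pos.2 h⟩
    · exact ⟨g₀, h⟩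
  -- the rational sign-pattern witness
  obtain ⟨x, hx⟩ := fm k (fvecs ψ) b
  -- clear denominators
  set D : ℤ := ∏ j, ((x j).den : ℤ) with hD
  have hD0' : 0 < D := Finset.prod_pos fun j _ => by exact_mod_cast (x j).pos
  have hD0 : (0:ℚ) < (D : ℚ) := by exact_mod_cast hD0'
  set m : Fin k → ℤ := fun i => (x i).num * ∏ j ∈ Finset.univ.erase i, ((x j).den : ℤ)
    with hmdef
  have hm : ∀ i, (m i : ℚ) = x i * (D : ℚ) := by
    intro i
    have hden : ((x i).den : ℚ) ≠ 0 := by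
      exact_mod_cast (x i).den_ne_zero
    have h1 : ((x i).num : ℚ) = x i * ((x i).den : ℚ) :=
      (div_eq_iff hden).1 (Rat.num_div_den (x i))
    rw [hmdef, hD]
    push_cast
    rw [h1, mul_assoc]
    congr 1
    exact Finset.mul_prod_erase Finset.univ (fun j => (((x j).den : ℚ))) (Finset.mem_univ i)
  set a : Fin k → G := fun i => m i • g with hadef
  have key : ∀ v ∈ fvecs ψ, SgnIff (∑ i, v i • b i) (∑ i, v i • a i) := by
    intro v hv
    have h1 := hx v hv
    have e1 : ∑ i, v i • a i = (∑ i, v i * m i) • g := by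
      simp [hadef, smul_smul, Finset.sum_smul]
    have e2 : ((∑ i, v i * m i : ℤ) : ℚ) = (∑ i, (v i : ℚ) * x i) * D := by
      push_cast
      rw [Finset.sum_mul]
      apply Finset.sum_congr rfl
      intro i _
      rw [hm i]; ring
    have e3 : SgnIff ((∑ i, v i * m i : ℤ)) (∑ i, (v i : ℚ) * x i) := by
      constructor
      · rw [show ((0:ℤ) < ∑ i, v i * m i) ↔ ((0:ℚ) < ((∑ i, v i * m i : ℤ) : ℚ)) from
          Int.cast_pos.symm, e2]
        exact mul_pos_iff_of_pos_right hD0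
      · rw [show ((∑ i, v i * m i : ℤ) = 0) ↔ (((∑ i, v i * m i : ℤ) : ℚ) = 0) from
          Int.cast_eq_zero.symm, e2]
        constructor
        · intro h
          rcases mul_eq_zero.1 h with h' | h'
          · exact h'
          · exact absurd h' hD0.ne'
        · intro h
          rw [h, zero_mul]
    rw [e1]
    exact h1.trans (e3.symm.trans (sgnIff_zsmul hg _).symm)
  exact (qf_transfer hqf default default b a key).mpr (hG a)
end

section
/- If G and H are divisible ordered abelian groups that are both nontrivial, then G and H are elementarily equivalent in the language {+, -, 0, ≤}. -/
open FirstOrder FirstOrder.Language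

namespace DOAGQE

/-- Integer linear combination of `n` variables. -/
abbrev LC (n : ℕ) := Fin n → ℤ

variable {G : Type} [AddCommGroup G] [LinearOrder G] [IsOrderedAddMonoid G]

def lcEval {n : ℕ} (c : LC n) (x : Fin n → G) : G := ∑ i, c i • x i

lemma lcEval_add {n} (c d : LC n) (x : Fin n → G) :
    lcEval (c + d) x = lcEval c x + lcEval d x := by
  simp [lcEval, add_zsmul, Finset.sum_add_distrib]

lemma lcEval_neg {n} (c : LC n) (x : Fin n → G) :
    lcEval (-c) x = -lcEval c x := by
  simp [lcEval, neg_zsmul]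

lemma lcEval_sub {n} (c d : LC n) (x : Fin n → G) :
    lcEval (c - d) x = lcEval c x - lcEval d x := by
  rw [sub_eq_add_neg, lcEval_add, lcEval_neg, sub_eq_add_neg]

lemma lcEval_zero {n} (x : Fin n → G) : lcEval (0 : LC n) x = 0 := by
  simp [lcEval]

lemma lcEval_smul {n} (m : ℤ) (c : LC n) (x : Fin n → G) :
    lcEval (m • c) x = m • lcEval c x := by
  simp [lcEval, mul_zsmul, Finset.smul_sum]

lemma lcEval_single {n} (i : Fin n) (x : Fin n → G) :
    lcEval (Pi.single i 1) x = x i := by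
  simp [lcEval]

lemma lcEval_snoc {n} (c : LC (n+1)) (x : Fin n → G) (z : G) :
    lcEval c (Fin.snoc x z) =
      c (Fin.last n) • z + lcEval (fun i => c i.castSucc) x := by
  simp [lcEval, Fin.sum_univ_castSucc, add_comm]

/-- A literal `(c, true)` means `0 ≤ c·x`; `(c, false)` means `¬ (0 ≤ c·x)`. -/
abbrev Literal (n : ℕ) := LC n × Bool

abbrev Clause (n : ℕ) := List (Literal n)

abbrev DNF (n : ℕ) := List (Clause n)

def litHolds {n} (l : Literal n) (x : Fin n → G) : Prop :=
  if l.2 then 0 ≤ lcEval l.1 x else ¬ (0 ≤ lcEval l.1 x)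

def clauseHolds {n} (C : Clause n) (x : Fin n → G) : Prop :=
  ∀ l ∈ C, litHolds l x

def dnfHolds {n} (D : DNF n) (x : Fin n → G) : Prop :=
  ∃ C ∈ D, clauseHolds C x

def negLit {n} (l : Literal n) : Literal n := (l.1, !l.2)

lemma litHolds_negLit {n} (l : Literal n) (x : Fin n → G) :
    litHolds (negLit l) x ↔ ¬ litHolds l x := by
  cases l with
  | mk c b => cases b <;> simp [litHolds, negLit]

def dnfNot {n} : DNF n → DNF n
  | [] => [([] : Clause n)]
  | C :: D => (C.map negLit).flatMap fun l => (dnfNot D).map fun C' => l :: C'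

lemma clauseHolds_cons {n} (l : Literal n) (C : Clause n) (x : Fin n → G) :
    clauseHolds (l :: C) x ↔ litHolds l x ∧ clauseHolds C x := by
  simp [clauseHolds]

lemma dnfHolds_dnfNot {n} (D : DNF n) (x : Fin n → G) :
    dnfHolds (dnfNot D) x ↔ ¬ dnfHolds D x := by
  induction D with
  | nil => simp [dnfHolds, dnfNot, clauseHolds]
  | cons C D ih =>
    constructor
    · rintro ⟨C', hC', h⟩ ⟨C₂, hC₂, h₂⟩
      simp only [dnfNot, List.mem_flatMap, List.mem_map] at hC'
      obtain ⟨l, hl, C₃, hC₃, rfl⟩ := hC'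
      obtain ⟨l₀, hl₀, rfl⟩ := hl
      rw [clauseHolds_cons] at h
      rcases List.mem_cons.1 hC₂ with rfl | hC₂
      · exact (litHolds_negLit _ _).1 h.1 (h₂ _ hl₀)
      · exact ih.1 ⟨C₃, hC₃, h.2⟩ ⟨C₂, hC₂, h₂⟩
    · intro h
      have h1 : ¬ clauseHolds C x := fun hc => h ⟨C, List.mem_cons_self, hc⟩
      have h2 : ¬ dnfHolds D x := fun ⟨C₂, hC₂, h₂⟩ => h ⟨C₂, List.mem_cons_of_mem _ hC₂, h₂⟩
      obtain ⟨l, hl, hnl⟩ : ∃ l ∈ C, ¬ litHolds l x := by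
        by_contra hc
        push_neg at hc
        exact h1 hc
      obtain ⟨C', hC', h'⟩ := ih.2 h2
      refine ⟨negLit l :: C', ?_, ?_⟩
      · simp only [dnfNot, List.mem_flatMap, List.mem_map]
        exact ⟨negLit l, ⟨l, hl, rfl⟩, C', hC', rfl⟩
      · rw [clauseHolds_cons]
        exact ⟨(litHolds_negLit _ _).2 hnl, h'⟩

lemma dnfHolds_append {n} (D₁ D₂ : DNF n) (x : Fin n → G) :
    dnfHolds (D₁ ++ D₂) x ↔ dnfHolds D₁ x ∨ dnfHolds D₂ x := by
  simp [dnfHolds, List.mem_append, or_and_right, exists_or]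

end DOAGQE

namespace DOAGQE

variable {G : Type} [AddCommGroup G] [LinearOrder G] [IsOrderedAddMonoid G]

/-- Divisibility predicate. -/
def Div (G : Type) [AddCommGroup G] : Prop := ∀ (g : G) (n : ℕ), 0 < n → ∃ x : G, n • x = g

lemma Div.int {G : Type} [AddCommGroup G] (h : Div G) (g : G) (m : ℤ) (hm : 0 < m) :
    ∃ x : G, m • x = g := by
  obtain ⟨x, hx⟩ := h g m.toNat (by omega)
  exact ⟨x, by rwa [← natCast_zsmul, Int.toNat_of_nonneg hm.le] at hx⟩

lemma exists_pos (G : Type) [AddCommGroup G] [LinearOrder G] [IsOrderedAddMonoid G] [Nontrivial G] :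
    ∃ e : G, 0 < e := by
  obtain ⟨e, he⟩ := exists_ne (0 : G)
  rcases lt_or_gt_of_ne he with h | h
  · exact ⟨-e, by simpa using h⟩
  · exact ⟨e, h⟩

lemma exists_between (hdiv : Div G) {a b : G} (hab : a < b) : ∃ z : G, a < z ∧ z < b := by
  obtain ⟨w, hw⟩ := hdiv (b - a) 2 (by norm_num)
  have hw' : w + w = b - a := by rw [← two_nsmul]; exact hw
  have hw0 : 0 < w := by
    by_contra hc
    push_neg at hc
    have : w + w ≤ 0 := by simpa using add_le_add hc hc
    rw [hw'] at this
    exact absurd (sub_pos.2 hab) (not_lt.2 this)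
  have hwb : w < b - a := by rw [← hw']; exact lt_add_of_pos_left w hw0
  refine ⟨a + w, lt_add_of_pos_right a hw0, ?_⟩
  have := add_lt_add_right hwb a
  rwa [add_sub_cancel] at this

/-- Every nonempty list has a maximal element. -/
lemma exists_list_max {α : Type*} [LinearOrder α] (l : List α) (hl : l ≠ []) :
    ∃ m ∈ l, ∀ a ∈ l, a ≤ m := by
  induction l with
  | nil => simp at hl
  | cons a l ih =>
    rcases eq_or_ne l [] with rfl | hne
    · exact ⟨a, by simp, by simp⟩
    · obtain ⟨m, hm, hmax⟩ := ih hne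
      rcases le_total a m with h | h
      · exact ⟨m, List.mem_cons_of_mem _ hm, by
          intro b hb; rcases List.mem_cons.1 hb with rfl | hb
          · exact h
          · exact hmax b hb⟩
      · exact ⟨a, List.mem_cons_self, by
          intro b hb; rcases List.mem_cons.1 hb with rfl | hb
          · exact le_rfl
          · exact (hmax b hb).trans h⟩

/-- A bound `(m, s, strict)`: for a lower bound it means `0 < m•z + s·x` (strict)
or `0 ≤ m•z + s·x`; for an upper bound `m•z + s·x < 0` or `m•z + s·x ≤ 0`. Always `0 < m`. -/
abbrev Bound (n : ℕ) := ℤ × LC n × Bool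

def lowerHolds {n} (b : Bound n) (z : G) (x : Fin n → G) : Prop :=
  if b.2.2 then 0 < b.1 • z + lcEval b.2.1 x else 0 ≤ b.1 • z + lcEval b.2.1 x

def upperHolds {n} (b : Bound n) (z : G) (x : Fin n → G) : Prop :=
  if b.2.2 then b.1 • z + lcEval b.2.1 x < 0 else b.1 • z + lcEval b.2.1 x ≤ 0

inductive Classified (n : ℕ) where
  | side : Literal n → Classified n
  | lower : Bound n → Classified n
  | upper : Bound n → Classified n

def classify {n} (l : Literal (n+1)) : Classified n :=
  let a := l.1 (Fin.last n)
  let r : LC n := fun i => l.1 i.castSucc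
  if a = 0 then .side (r, l.2)
  else if 0 < a then
    (if l.2 then .lower (a, r, false) else .upper (a, r, true))
  else
    (if l.2 then .upper (-a, -r, false) else .lower (-a, -r, true))

def classifiedHolds {n} (c : Classified n) (z : G) (x : Fin n → G) : Prop :=
  match c with
  | .side s => litHolds s x
  | .lower b => lowerHolds b z x
  | .upper b => upperHolds b z x

section ClassifyLemmas

variable {n : ℕ} (c : LC (n+1)) (x : Fin n → G) (z : G)

lemma classify_eq_zero (h1 : c (Fin.last n) = 0) (b : Bool) :
    classify (c, b) = .side ((fun i => c i.castSucc), b) := by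
  simp [classify, h1]

lemma classify_pos_true (h1 : 0 < c (Fin.last n)) :
    classify (c, true) = .lower (c (Fin.last n), (fun i => c i.castSucc), false) := by
  simp [classify, h1, h1.ne']

lemma classify_pos_false (h1 : 0 < c (Fin.last n)) :
    classify (c, false) = .upper (c (Fin.last n), (fun i => c i.castSucc), true) := by
  simp [classify, h1, h1.ne']

lemma classify_neg_true (h1 : c (Fin.last n) < 0) :
    classify (c, true) = .upper (-(c (Fin.last n)), -(fun i => c i.castSucc), false) := by
  simp [classify, h1.ne, not_lt.2 h1.le]

lemma classify_neg_false (h1 : c (Fin.last n) < 0) :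
    classify (c, false) = .lower (-(c (Fin.last n)), -(fun i => c i.castSucc), true) := by
  simp [classify, h1.ne, not_lt.2 h1.le]

lemma classify_lower_pos (l : Literal (n+1)) (b : Bound n)
    (h : classify l = .lower b) : 0 < b.1 := by
  obtain ⟨c, bb⟩ := l
  rcases lt_trichotomy (c (Fin.last n)) 0 with h1 | h1 | h1 <;> cases bb
  · rw [classify_neg_false _ h1] at h; cases h; simpa using h1
  · rw [classify_neg_true _ h1] at h; exact absurd h (by simp)
  · rw [classify_eq_zero _ h1] at h; exact absurd h (by simp)
  · rw [classify_eq_zero _ h1] at h; exact absurd h (by simp)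
  · rw [classify_pos_false _ h1] at h; exact absurd h (by simp)
  · rw [classify_pos_true _ h1] at h; cases h; exact h1

lemma classify_upper_pos (l : Literal (n+1)) (b : Bound n)
    (h : classify l = .upper b) : 0 < b.1 := by
  obtain ⟨c, bb⟩ := l
  rcases lt_trichotomy (c (Fin.last n)) 0 with h1 | h1 | h1 <;> cases bb
  · rw [classify_neg_false _ h1] at h; exact absurd h (by simp)
  · rw [classify_neg_true _ h1] at h; cases h; simpa using h1
  · rw [classify_eq_zero _ h1] at h; exact absurd h (by simp)
  · rw [classify_eq_zero _ h1] at h; exact absurd h (by simp)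
  · rw [classify_pos_false _ h1] at h; cases h; exact h1
  · rw [classify_pos_true _ h1] at h; exact absurd h (by simp)

lemma litHolds_snoc (l : Literal (n+1)) :
    litHolds l (Fin.snoc x z) ↔ classifiedHolds (classify l) z x := by
  obtain ⟨c, bb⟩ := l
  have hev : lcEval c (Fin.snoc x z) =
      c (Fin.last n) • z + lcEval (fun i => c i.castSucc) x := lcEval_snoc _ _ _
  have hneg : (-(c (Fin.last n))) • z + lcEval (-(fun i => c i.castSucc)) x
      = -(c (Fin.last n) • z + lcEval (fun i => c i.castSucc) x) := by
    rw [lcEval_neg, neg_zsmul]; abel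
  rcases lt_trichotomy (c (Fin.last n)) 0 with h1 | h1 | h1 <;> cases bb
  · rw [classify_neg_false _ h1]
    simp only [classifiedHolds, litHolds, lowerHolds, hev, hneg]
    simp only [if_true, Bool.false_eq_true, if_false, ite_false, ite_true]
    rw [not_le, ← neg_pos]
  · rw [classify_neg_true _ h1]
    simp only [classifiedHolds, litHolds, upperHolds, hev, hneg]
    simp only [if_true, Bool.false_eq_true, if_false, ite_false, ite_true]
    rw [neg_nonpos]
  · rw [classify_eq_zero _ h1]
    simp only [classifiedHolds, litHolds, hev, h1, zero_zsmul, zero_add]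
  · rw [classify_eq_zero _ h1]
    simp only [classifiedHolds, litHolds, hev, h1, zero_zsmul, zero_add]
  · rw [classify_pos_false _ h1]
    simp only [classifiedHolds, litHolds, upperHolds, hev]
    simp only [if_true, Bool.false_eq_true, if_false, ite_false, ite_true]
    rw [not_le]
  · rw [classify_pos_true _ h1]
    simp only [classifiedHolds, litHolds, lowerHolds, hev]
    simp only [if_true, Bool.false_eq_true, if_false, ite_false, ite_true]

end ClassifyLemmas

end DOAGQE

namespace DOAGQE

variable {G : Type} [AddCommGroup G] [LinearOrder G] [IsOrderedAddMonoid G]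


lemma aux_nonneg_add (u w : G) : 0 ≤ u + w ↔ -w ≤ u := by
  constructor
  · intro h; have := sub_le_sub_right h w; simpa using this
  · intro h; have := add_le_add_left h w; simpa using this

lemma aux_pos_add (u w : G) : 0 < u + w ↔ -w < u := by
  constructor
  · intro h; have := sub_lt_sub_right h w; simpa using this
  · intro h; have := add_lt_add_left h w; simpa using this

lemma aux_add_nonpos (u w : G) : u + w ≤ 0 ↔ u ≤ -w := by
  constructor
  · intro h; have := sub_le_sub_right h w; simpa using this
  · intro h; have := add_le_add_left h w; simpa using this

lemma aux_add_neg (u w : G) : u + w < 0 ↔ u < -w := by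
  constructor
  · intro h; have := sub_lt_sub_right h w; simpa using this
  · intro h; have := add_lt_add_left h w; simpa using this

/-- The (unique) solution `v` of `m • v = -(s·x)` for a bound `(m,s,_)`, junk if `m ≤ 0`. -/
noncomputable def solVal (hdiv : Div G) {n} (b : Bound n) (x : Fin n → G) : G :=
  if h : 0 < b.1 then Classical.choose (hdiv.int (-(lcEval b.2.1 x)) b.1 h) else 0

lemma solVal_spec (hdiv : Div G) {n} (b : Bound n) (x : Fin n → G) (hb : 0 < b.1) :
    b.1 • solVal hdiv b x = -(lcEval b.2.1 x) := by
  rw [solVal, dif_pos hb]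
  exact Classical.choose_spec (hdiv.int (-(lcEval b.2.1 x)) b.1 hb)

lemma lowerHolds_iff (hdiv : Div G) {n} (b : Bound n) (x : Fin n → G) (z : G) (hb : 0 < b.1) :
    lowerHolds b z x ↔
      (if b.2.2 then solVal hdiv b x < z else solVal hdiv b x ≤ z) := by
  have h1 : (0 ≤ b.1 • z + lcEval b.2.1 x) ↔ (solVal hdiv b x ≤ z) := by
    rw [aux_nonneg_add]
    rw [← solVal_spec hdiv b x hb, zsmul_le_zsmul_iff_right hb]
  have h2 : (0 < b.1 • z + lcEval b.2.1 x) ↔ (solVal hdiv b x < z) := by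
    rw [aux_pos_add]
    rw [← solVal_spec hdiv b x hb, zsmul_lt_zsmul_iff_right hb]
  unfold lowerHolds
  cases hs : b.2.2 <;> simp [h1, h2]

lemma upperHolds_iff (hdiv : Div G) {n} (b : Bound n) (x : Fin n → G) (z : G) (hb : 0 < b.1) :
    upperHolds b z x ↔
      (if b.2.2 then z < solVal hdiv b x else z ≤ solVal hdiv b x) := by
  have h1 : (b.1 • z + lcEval b.2.1 x ≤ 0) ↔ (z ≤ solVal hdiv b x) := by
    rw [aux_add_nonpos]
    rw [← solVal_spec hdiv b x hb, zsmul_le_zsmul_iff_right hb]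
  have h2 : (b.1 • z + lcEval b.2.1 x < 0) ↔ (z < solVal hdiv b x) := by
    rw [aux_add_neg]
    rw [← solVal_spec hdiv b x hb, zsmul_lt_zsmul_iff_right hb]
  unfold upperHolds
  cases hs : b.2.2 <;> simp [h1, h2]

/-- The Fourier–Motzkin cross literal of a lower and an upper bound. -/
def cross {n} (b₁ b₂ : Bound n) : Literal n :=
  if b₁.2.2 || b₂.2.2 then (b₁.1 • b₂.2.1 - b₂.1 • b₁.2.1, false)
  else (b₂.1 • b₁.2.1 - b₁.1 • b₂.2.1, true)

lemma litHolds_cross (hdiv : Div G) {n} (b₁ b₂ : Bound n) (x : Fin n → G)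
    (hb₁ : 0 < b₁.1) (hb₂ : 0 < b₂.1) :
    litHolds (cross b₁ b₂) x ↔
      (if b₁.2.2 || b₂.2.2 then solVal hdiv b₁ x < solVal hdiv b₂ x
        else solVal hdiv b₁ x ≤ solVal hdiv b₂ x) := by
  set v₁ := solVal hdiv b₁ x with hv₁
  set v₂ := solVal hdiv b₂ x with hv₂
  have hmm : (0 : ℤ) < b₁.1 * b₂.1 := mul_pos hb₁ hb₂
  have key : lcEval (b₂.1 • b₁.2.1 - b₁.1 • b₂.2.1) x = (b₁.1 * b₂.1) • v₂ - (b₁.1 * b₂.1) • v₁ := by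
    rw [lcEval_sub, lcEval_smul, lcEval_smul]
    rw [show (b₁.1 * b₂.1) • v₂ = b₁.1 • (b₂.1 • v₂) from mul_zsmul _ _ _,
        show (b₁.1 * b₂.1) • v₁ = b₂.1 • (b₁.1 • v₁) by rw [mul_comm]; exact mul_zsmul _ _ _]
    rw [solVal_spec hdiv b₁ x hb₁, solVal_spec hdiv b₂ x hb₂]
    rw [smul_neg, smul_neg]
    abel
  have hle : (0 ≤ lcEval (b₂.1 • b₁.2.1 - b₁.1 • b₂.2.1) x) ↔ v₁ ≤ v₂ := by
    rw [key, sub_nonneg, zsmul_le_zsmul_iff_right hmm]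
  have hlt : (0 < lcEval (b₂.1 • b₁.2.1 - b₁.1 • b₂.2.1) x) ↔ v₁ < v₂ := by
    rw [key, sub_pos, zsmul_lt_zsmul_iff_right hmm]
  unfold cross
  cases hs : (b₁.2.2 || b₂.2.2)
  · simp only [if_false, Bool.false_eq_true, ite_false, litHolds, ite_true, if_true]
    exact hle
  · simp only [if_true, ite_true, litHolds, Bool.false_eq_true, ite_false]
    rw [show b₁.1 • b₂.2.1 - b₂.1 • b₁.2.1 = -(b₂.1 • b₁.2.1 - b₁.1 • b₂.2.1) by abel]
    rw [lcEval_neg, ← hlt, not_le, neg_lt_zero]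

/-- Side literals, lower bounds and upper bounds of a clause in `n+1` variables. -/
def sides {n} (C : Clause (n+1)) : Clause n :=
  C.filterMap fun l => match classify l with | .side s => some s | _ => none

def lowers {n} (C : Clause (n+1)) : List (Bound n) :=
  C.filterMap fun l => match classify l with | .lower b => some b | _ => none

def uppers {n} (C : Clause (n+1)) : List (Bound n) :=
  C.filterMap fun l => match classify l with | .upper b => some b | _ => none

lemma mem_lowers {n} {C : Clause (n+1)} {b : Bound n} :
    b ∈ lowers C ↔ ∃ l ∈ C, classify l = .lower b := by
  simp only [lowers, List.mem_filterMap]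
  constructor
  · rintro ⟨l, hl, h⟩
    refine ⟨l, hl, ?_⟩
    cases hc : classify l <;> rw [hc] at h <;> simp at h <;> rw [h] <;> rfl
  · rintro ⟨l, hl, h⟩
    exact ⟨l, hl, by rw [h]⟩

lemma mem_uppers {n} {C : Clause (n+1)} {b : Bound n} :
    b ∈ uppers C ↔ ∃ l ∈ C, classify l = .upper b := by
  simp only [uppers, List.mem_filterMap]
  constructor
  · rintro ⟨l, hl, h⟩
    refine ⟨l, hl, ?_⟩
    cases hc : classify l <;> rw [hc] at h <;> simp at h <;> rw [h] <;> rfl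
  · rintro ⟨l, hl, h⟩
    exact ⟨l, hl, by rw [h]⟩

lemma mem_sides {n} {C : Clause (n+1)} {s : Literal n} :
    s ∈ sides C ↔ ∃ l ∈ C, classify l = .side s := by
  simp only [sides, List.mem_filterMap]
  constructor
  · rintro ⟨l, hl, h⟩
    refine ⟨l, hl, ?_⟩
    cases hc : classify l <;> rw [hc] at h <;> simp at h <;> rw [h] <;> rfl
  · rintro ⟨l, hl, h⟩
    exact ⟨l, hl, by rw [h]⟩

lemma lowers_pos {n} {C : Clause (n+1)} {b : Bound n} (h : b ∈ lowers C) : 0 < b.1 := by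
  obtain ⟨l, -, h⟩ := mem_lowers.1 h
  exact classify_lower_pos l b h

lemma uppers_pos {n} {C : Clause (n+1)} {b : Bound n} (h : b ∈ uppers C) : 0 < b.1 := by
  obtain ⟨l, -, h⟩ := mem_uppers.1 h
  exact classify_upper_pos l b h

lemma clauseHolds_snoc {n} (C : Clause (n+1)) (x : Fin n → G) (z : G) :
    clauseHolds C (Fin.snoc x z) ↔
      (∀ s ∈ sides C, litHolds s x) ∧ (∀ b ∈ lowers C, lowerHolds b z x) ∧
        (∀ b ∈ uppers C, upperHolds b z x) := by
  constructor
  · intro h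
    refine ⟨?_, ?_, ?_⟩
    · intro s hs
      obtain ⟨l, hl, hc⟩ := mem_sides.1 hs
      have := (litHolds_snoc x z l).1 (h l hl)
      rwa [hc] at this
    · intro b hb
      obtain ⟨l, hl, hc⟩ := mem_lowers.1 hb
      have := (litHolds_snoc x z l).1 (h l hl)
      rwa [hc] at this
    · intro b hb
      obtain ⟨l, hl, hc⟩ := mem_uppers.1 hb
      have := (litHolds_snoc x z l).1 (h l hl)
      rwa [hc] at this
  · rintro ⟨h₁, h₂, h₃⟩ l hl
    rw [litHolds_snoc x z l]
    cases hc : classify l with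
    | side s => exact h₁ s (mem_sides.2 ⟨l, hl, hc⟩)
    | lower b => exact h₂ b (mem_lowers.2 ⟨l, hl, hc⟩)
    | upper b => exact h₃ b (mem_uppers.2 ⟨l, hl, hc⟩)

/-- Existential elimination of the last variable from a clause. -/
def clauseEx {n} (C : Clause (n+1)) : Clause n :=
  sides C ++ (((lowers C) ×ˢ (uppers C)).map fun p => cross p.1 p.2)

end DOAGQE

namespace DOAGQE

variable {G : Type} [AddCommGroup G] [LinearOrder G] [IsOrderedAddMonoid G]

lemma exists_list_min {α : Type*} [LinearOrder α] (l : List α) (hl : l ≠ []) :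
    ∃ m ∈ l, ∀ a ∈ l, m ≤ a := by
  obtain ⟨m, hm, h⟩ := exists_list_max (α := αᵒᵈ) l hl
  exact ⟨m, hm, h⟩

/-- Given lists of (strict/nonstrict) lower and upper endpoints that are pairwise
compatible, there is a point between them. -/
lemma exists_sandwich [Nontrivial G] (hdiv : Div G) (L U : List (G × Bool))
    (h : ∀ p ∈ L, ∀ q ∈ U, if p.2 || q.2 then p.1 < q.1 else p.1 ≤ q.1) :
    ∃ z : G, (∀ p ∈ L, if p.2 then p.1 < z else p.1 ≤ z) ∧
      (∀ q ∈ U, if q.2 then z < q.1 else z ≤ q.1) := by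
  obtain ⟨e, he⟩ := exists_pos G
  rcases eq_or_ne L [] with rfl | hL
  · rcases eq_or_ne U [] with rfl | hU
    · exact ⟨0, by simp, by simp⟩
    · obtain ⟨m, hm, hmin⟩ := exists_list_min (U.map Prod.fst) (by simpa using hU)
      refine ⟨m - e, by simp, ?_⟩
      intro q hq
      have h1 : m ≤ q.1 := hmin _ (List.mem_map.2 ⟨q, hq, rfl⟩)
      have h2 : m - e < m := by simpa using sub_lt_sub_right (by simpa using he) m
      have := h2.trans_le h1
      cases hqb : q.2 <;> simp [this, this.le]
  · rcases eq_or_ne U [] with rfl | hU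
    · obtain ⟨m, hm, hmax⟩ := exists_list_max (L.map Prod.fst) (by simpa using hL)
      refine ⟨m + e, ?_, by simp⟩
      intro p hp
      have h1 : p.1 ≤ m := hmax _ (List.mem_map.2 ⟨p, hp, rfl⟩)
      have h2 : m < m + e := lt_add_of_pos_right m he
      have := h1.trans_lt h2
      cases hpb : p.2 <;> simp [this, this.le]
    · obtain ⟨a, ha, hmax⟩ := exists_list_max (L.map Prod.fst) (by simpa using hL)
      obtain ⟨b, hb, hmin⟩ := exists_list_min (U.map Prod.fst) (by simpa using hU)
      obtain ⟨p₀, hp₀, hp₀a⟩ := List.mem_map.1 ha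
      obtain ⟨q₀, hq₀, hq₀b⟩ := List.mem_map.1 hb
      have hamax : ∀ p ∈ L, p.1 ≤ a := fun p hp => hmax _ (List.mem_map.2 ⟨p, hp, rfl⟩)
      have hbmin : ∀ q ∈ U, b ≤ q.1 := fun q hq => hmin _ (List.mem_map.2 ⟨q, hq, rfl⟩)
      rcases lt_or_ge a b with hab | hab
      · obtain ⟨z, hz1, hz2⟩ := exists_between hdiv hab
        refine ⟨z, ?_, ?_⟩
        · intro p hp
          have := (hamax p hp).trans_lt hz1
          cases hpb : p.2 <;> simp [this, this.le]
        · intro q hq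
          have := hz2.trans_le (hbmin q hq)
          cases hqb : q.2 <;> simp [this, this.le]
      · have hba : a = b := by
          have hthis := h p₀ hp₀ q₀ hq₀
          have hle : p₀.1 ≤ q₀.1 := by
            by_cases hc : (p₀.2 || q₀.2) = true
            · rw [if_pos hc] at hthis; exact hthis.le
            · rw [if_neg hc] at hthis; exact hthis
          rw [hp₀a, hq₀b] at hle
          exact le_antisymm hle hab
        subst hba
        refine ⟨a, ?_, ?_⟩
        · intro p hp
          cases hpb : p.2
          · simpa using hamax p hp
          · have := h p hp q₀ hq₀
            rw [hpb] at this
            simp only [Bool.true_or, if_true] at this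
            rw [hq₀b] at this
            simpa using this
        · intro q hq
          cases hqb : q.2
          · simpa using hbmin q hq
          · have := h p₀ hp₀ q hq
            rw [hqb] at this
            simp only [Bool.or_true, if_true] at this
            rw [hp₀a] at this
            simpa using this

end DOAGQE

namespace DOAGQE

variable {G : Type} [AddCommGroup G] [LinearOrder G] [IsOrderedAddMonoid G]

lemma clauseEx_correct [Nontrivial G] (hdiv : Div G) {n} (C : Clause (n+1)) (x : Fin n → G) :
    (∃ z, clauseHolds C (Fin.snoc x z)) ↔ clauseHolds (clauseEx C) x := by
  constructor
  · rintro ⟨z, h⟩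
    rw [clauseHolds_snoc] at h
    obtain ⟨hs, hlo, hup⟩ := h
    intro l hl
    rcases List.mem_append.1 hl with hl | hl
    · exact hs l hl
    · obtain ⟨p, hp, rfl⟩ := List.mem_map.1 hl
      obtain ⟨hp1, hp2⟩ := List.mem_product.1 hp
      have hb₁ := lowers_pos hp1
      have hb₂ := uppers_pos hp2
      have h₁ := (lowerHolds_iff hdiv p.1 x z hb₁).1 (hlo p.1 hp1)
      have h₂ := (upperHolds_iff hdiv p.2 x z hb₂).1 (hup p.2 hp2)
      rw [litHolds_cross hdiv p.1 p.2 x hb₁ hb₂]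
      cases hs₁ : p.1.2.2 <;> cases hs₂ : p.2.2.2 <;>
        rw [hs₁] at h₁ <;> rw [hs₂] at h₂ <;> simp only [if_true, if_false,
          Bool.false_or, Bool.or_false, Bool.true_or, Bool.or_true,
          Bool.false_eq_true, ite_true, ite_false] at h₁ h₂ ⊢
      · exact h₁.trans h₂
      · exact h₁.trans_lt h₂
      · exact h₁.trans_le h₂
      · exact h₁.trans h₂
  · intro h
    have hsides : ∀ s ∈ sides C, litHolds s x :=
      fun s hs => h s (List.mem_append_left _ hs)
    have hcross : ∀ b₁ ∈ lowers C, ∀ b₂ ∈ uppers C, litHolds (cross b₁ b₂) x := by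
      intro b₁ h₁ b₂ h₂
      exact h _ (List.mem_append_right _
        (List.mem_map.2 ⟨(b₁, b₂), List.mem_product.2 ⟨h₁, h₂⟩, rfl⟩))
    obtain ⟨z, hz₁, hz₂⟩ := exists_sandwich hdiv
      ((lowers C).map fun b => (solVal hdiv b x, b.2.2))
      ((uppers C).map fun b => (solVal hdiv b x, b.2.2))
      (by
        rintro p hp q hq
        obtain ⟨b₁, hb₁, rfl⟩ := List.mem_map.1 hp
        obtain ⟨b₂, hb₂, rfl⟩ := List.mem_map.1 hq
        have := (litHolds_cross hdiv b₁ b₂ x (lowers_pos hb₁) (uppers_pos hb₂)).1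
          (hcross b₁ hb₁ b₂ hb₂)
        simpa using this)
    refine ⟨z, ?_⟩
    rw [clauseHolds_snoc]
    refine ⟨hsides, ?_, ?_⟩
    · intro b hb
      have := hz₁ (solVal hdiv b x, b.2.2) (List.mem_map.2 ⟨b, hb, rfl⟩)
      rw [lowerHolds_iff hdiv b x z (lowers_pos hb)]
      simpa using this
    · intro b hb
      have := hz₂ (solVal hdiv b x, b.2.2) (List.mem_map.2 ⟨b, hb, rfl⟩)
      rw [upperHolds_iff hdiv b x z (uppers_pos hb)]
      simpa using this

lemma dnfHolds_map_clauseEx [Nontrivial G] (hdiv : Div G) {n} (D : DNF (n+1)) (x : Fin n → G) :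
    dnfHolds (D.map clauseEx) x ↔ ∃ z, dnfHolds D (Fin.snoc x z) := by
  constructor
  · rintro ⟨C', hC', h⟩
    obtain ⟨C, hC, rfl⟩ := List.mem_map.1 hC'
    obtain ⟨z, hz⟩ := (clauseEx_correct hdiv C x).2 h
    exact ⟨z, C, hC, hz⟩
  · rintro ⟨z, C, hC, h⟩
    exact ⟨clauseEx C, List.mem_map.2 ⟨C, hC, rfl⟩, (clauseEx_correct hdiv C x).1 ⟨z, h⟩⟩

end DOAGQE

namespace DOAGQE

attribute [local instance] oagStructure

variable {G : Type} [AddCommGroup G] [LinearOrder G] [IsOrderedAddMonoid G]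

/-- The coefficients of a term, viewed as a linear combination of the variables. -/
def coeffs {n : ℕ} : oagLang.Term (Empty ⊕ Fin n) → LC n
  | .var (.inl e) => e.elim
  | .var (.inr i) => Pi.single i 1
  | @Term.func _ _ 0 _ _ => 0
  | @Term.func _ _ 1 _ ts => -(coeffs (ts 0))
  | @Term.func _ _ 2 _ ts => coeffs (ts 0) + coeffs (ts 1)
  | @Term.func _ _ (_+3) f _ => f.elim

lemma realize_coeffs {n : ℕ} : ∀ (t : oagLang.Term (Empty ⊕ Fin n)) (x : Fin n → G),
    Term.realize (Sum.elim Empty.elim x) t = lcEval (coeffs t) x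
  | .var (.inl e), _ => e.elim
  | .var (.inr i), x => by
    simp [Term.realize, coeffs, lcEval_single]
  | @Term.func _ _ 0 f ts, x => by
    have h : Term.realize (Sum.elim Empty.elim x) (Term.func f ts) = (0 : G) := rfl
    rw [h]
    simp only [coeffs, lcEval_zero]
  | @Term.func _ _ 1 f ts, x => by
    have h : Term.realize (Sum.elim Empty.elim x) (Term.func f ts)
        = -(Term.realize (Sum.elim Empty.elim x) (ts 0)) := rfl
    rw [h, realize_coeffs (ts 0) x]
    simp only [coeffs, lcEval_neg]
  | @Term.func _ _ 2 f ts, x => by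
    have h : Term.realize (Sum.elim Empty.elim x) (Term.func f ts)
        = Term.realize (Sum.elim Empty.elim x) (ts 0)
          + Term.realize (Sum.elim Empty.elim x) (ts 1) := rfl
    rw [h, realize_coeffs (ts 0) x, realize_coeffs (ts 1) x]
    simp only [coeffs, lcEval_add]
  | @Term.func _ _ (_+3) f _, _ => f.elim

def relDNF : ∀ {n l}, oagLang.Relations l → (Fin l → oagLang.Term (Empty ⊕ Fin n)) → DNF n
  | _, 2, _, ts => [ [(coeffs (ts 1) - coeffs (ts 0), true)] ]
  | _, 0, r, _ => r.elim
  | _, 1, r, _ => r.elim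
  | _, _+3, r, _ => r.elim

/-- Quantifier elimination: a DNF of linear sign conditions equivalent to a formula. -/
def toDNF : ∀ {n}, oagLang.BoundedFormula Empty n → DNF n
  | _, .falsum => []
  | _, .equal t u => [ [(coeffs u - coeffs t, true), (coeffs t - coeffs u, true)] ]
  | _, .rel r ts => relDNF r ts
  | _, .imp φ ψ => dnfNot (toDNF φ) ++ toDNF ψ
  | _, .all φ => dnfNot ((dnfNot (toDNF φ)).map clauseEx)

theorem toDNF_correct [Nontrivial G] (hdiv : Div G) :
    ∀ {n} (φ : oagLang.BoundedFormula Empty n) (x : Fin n → G),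
      φ.Realize Empty.elim x ↔ dnfHolds (toDNF φ) x := by
  intro n φ
  induction φ with
  | falsum =>
    intro x
    simp [toDNF, dnfHolds, BoundedFormula.Realize]
  | equal t u =>
    intro x
    have hre : (BoundedFormula.equal t u).Realize (M := G) Empty.elim x ↔
        Term.realize (Sum.elim Empty.elim x) t = Term.realize (Sum.elim Empty.elim x) u :=
      Iff.rfl
    rw [hre, realize_coeffs t x, realize_coeffs u x]
    simp only [toDNF, dnfHolds, clauseHolds, List.mem_singleton, litHolds]
    constructor
    · rintro h
      refine ⟨_, rfl, ?_⟩
      intro l hl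
      rcases List.mem_cons.1 hl with rfl | hl
      · simpa [litHolds, lcEval_sub, h] using le_refl (0 : G)
      · rcases List.mem_singleton.1 hl with rfl
        simpa [litHolds, lcEval_sub, h] using le_refl (0 : G)
    · rintro ⟨C, rfl, h⟩
      have h1 := h _ (List.mem_cons_self)
      have h2 := h _ (List.mem_cons_of_mem _ (List.mem_singleton_self _))
      simp only [litHolds, if_true, ite_true, lcEval_sub, sub_nonneg] at h1 h2
      exact le_antisymm h1 h2
  | rel r ts =>
    intro x
    rename_i l
    match l, r with
    | 2, r =>
      have hrel : (BoundedFormula.rel r ts).Realize (M := G) Empty.elim x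
          ↔ Term.realize (Sum.elim Empty.elim x) (ts 0)
            ≤ Term.realize (Sum.elim Empty.elim x) (ts 1) := Iff.rfl
      rw [hrel, realize_coeffs (ts 0) x, realize_coeffs (ts 1) x]
      simp only [relDNF, toDNF, dnfHolds, clauseHolds, List.mem_singleton]
      constructor
      · intro h
        exact ⟨_, rfl, by
          intro lit hlit
          rcases List.mem_singleton.1 hlit with rfl
          simpa [litHolds, lcEval_sub, sub_nonneg] using h⟩
      · rintro ⟨C, rfl, h⟩
        have h1 := h _ (List.mem_singleton_self _)
        simpa [litHolds, lcEval_sub, sub_nonneg] using h1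
    | 0, r => exact r.elim
    | 1, r => exact r.elim
    | (k+3), r => exact r.elim
  | imp φ ψ ihφ ihψ =>
    intro x
    rw [BoundedFormula.realize_imp, ihφ x, ihψ x]
    show _ ↔ dnfHolds (dnfNot (toDNF φ) ++ toDNF ψ) x
    rw [dnfHolds_append, dnfHolds_dnfNot, imp_iff_not_or]
  | all φ ih =>
    intro x
    rw [BoundedFormula.realize_all]
    show _ ↔ dnfHolds (dnfNot ((dnfNot (toDNF φ)).map clauseEx)) x
    rw [dnfHolds_dnfNot, dnfHolds_map_clauseEx hdiv]
    constructor
    · intro h hc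
      obtain ⟨z, hz⟩ := hc
      rw [dnfHolds_dnfNot] at hz
      exact hz ((ih (Fin.snoc x z)).1 (h z))
    · intro h z
      rw [ih (Fin.snoc x z)]
      by_contra hc
      exact h ⟨z, (dnfHolds_dnfNot _ _).2 hc⟩

end DOAGQE

namespace DOAGQE

variable {G : Type} [AddCommGroup G] [LinearOrder G] [IsOrderedAddMonoid G]

lemma litHolds_zero (l : Literal 0) (x : Fin 0 → G) : litHolds l x ↔ l.2 = true := by
  have h : lcEval l.1 x = 0 := by simp [lcEval]
  cases hb : l.2 <;> simp [litHolds, h, hb]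

/-- Truth of a variable-free DNF, independent of any structure. -/
def dnfTriv (D : DNF 0) : Prop := ∃ C ∈ D, ∀ l ∈ C, l.2 = true

lemma dnfHolds_zero (D : DNF 0) (x : Fin 0 → G) : dnfHolds D x ↔ dnfTriv D := by
  unfold dnfHolds dnfTriv clauseHolds
  constructor
  · rintro ⟨C, hC, h⟩
    exact ⟨C, hC, fun l hl => (litHolds_zero l x).1 (h l hl)⟩
  · rintro ⟨C, hC, h⟩
    exact ⟨C, hC, fun l hl => (litHolds_zero l x).2 (h l hl)⟩

end DOAGQE

/-- Any two nontrivial divisible ordered abelian groups are elementarily equivalent in the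
language `{+, -, 0, ≤}`. -/
theorem divisible_oag_elementarilyEquivalent (G H : Type)
    [AddCommGroup G] [LinearOrder G] [IsOrderedAddMonoid G]
    [AddCommGroup H] [LinearOrder H] [IsOrderedAddMonoid H]
    [Nontrivial G] [Nontrivial H]
    (hG : ∀ (g : G) (n : ℕ), 0 < n → ∃ x : G, n • x = g)
    (hH : ∀ (h : H) (n : ℕ), 0 < n → ∃ x : H, n • x = h) :
    ∀ φ : oagLang.Sentence,
      (letI := oagStructure G; G ⊨ φ) ↔ (letI := oagStructure H; H ⊨ φ) := by
  intro φ
  have hG' : DOAGQE.Div G := hG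
  have hH' : DOAGQE.Div H := hH
  have e1 : (letI := oagStructure G; G ⊨ φ) ↔ DOAGQE.dnfTriv (DOAGQE.toDNF φ) := by
    letI := oagStructure G
    have hv : (default : Empty → G) = Empty.elim := Subsingleton.elim _ _
    show BoundedFormula.Realize φ (default : Empty → G) (default : Fin 0 → G) ↔ _
    rw [hv, DOAGQE.toDNF_correct hG' φ default, DOAGQE.dnfHolds_zero]
  have e2 : (letI := oagStructure H; H ⊨ φ) ↔ DOAGQE.dnfTriv (DOAGQE.toDNF φ) := by
    letI := oagStructure H
    have hv : (default : Empty → H) = Empty.elim := Subsingleton.elim _ _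
    show BoundedFormula.Realize φ (default : Empty → H) (default : Fin 0 → H) ↔ _
    rw [hv, DOAGQE.toDNF_correct hH' φ default, DOAGQE.dnfHolds_zero]
  rw [e1, e2]
end
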